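/- The transfer entropy T(A→S | S=s, do(A=a)) := H(S'|S=s) − H(S'|S=s, do(A=a)) satisfies, for every action a with p(a|s)>0, the lower bound T(A→S | S=s, do(A=a)) ≥ min_{a'} (1 − 1/p(a'|s)) · H(S'|S=s), where the minimum is over actions a' with p(a'|s) > 0. -/

import Mathlib

/-- `-(x * log x) ≥ 0` for `x ∈ [0,1]`. -/
lemma aux_neg_mul_log_nonneg {x : ℝ} (h0 : 0 ≤ x) (h1 : x ≤ 1) :
    0 ≤ -(x * Real.log x) := by
  have := Real.log_nonpos h0 h1
  nlinarith

/-- Lower bound on transfer entropy: for every action `a` (with full-support policy),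
`T(A→S | S=s, do(A=a)) ≥ min_{a'} (1 − 1/p(a'|s)) · H(S'|S=s)`. -/
theorem transfer_entropy_lower_bound
    {S A : Type} [Fintype S] [Fintype A] [Nonempty A]
    (pT : A → S → ℝ)
    (hT0 : ∀ a s', 0 ≤ pT a s')
    (hT1 : ∀ a, ∑ s' : S, pT a s' = 1)
    (π : A → ℝ)
    (hπpos : ∀ a, 0 < π a)
    (hπ1 : ∑ a : A, π a = 1)
    (m : S → ℝ) (hm : ∀ s', m s' = ∑ a : A, π a * pT a s')
    (H : ℝ) (hH : H = -∑ s' : S, m s' * Real.log (m s'))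
    (a : A) :
    H - (-∑ s' : S, pT a s' * Real.log (pT a s'))
      ≥ (Finset.univ.inf' Finset.univ_nonempty (fun a' : A => 1 - 1 / π a')) * H := by
  -- basic facts about m
  have hm0 : ∀ s', 0 ≤ m s' := fun s' => by
    rw [hm]
    exact Finset.sum_nonneg fun b _ => mul_nonneg (hπpos b).le (hT0 b s')
  have hmsum : ∑ s' : S, m s' = 1 := by
    simp_rw [hm]
    rw [Finset.sum_comm]
    simp_rw [← Finset.mul_sum, hT1, mul_one, hπ1]
  have hm1 : ∀ s', m s' ≤ 1 := fun s' => by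
    have h := Finset.single_le_sum (f := m) (fun i _ => hm0 i) (Finset.mem_univ s')
    linarith
  have hT1' : ∀ b s', pT b s' ≤ 1 := fun b s' => by
    have h := Finset.single_le_sum (f := pT b) (fun i _ => hT0 b i) (Finset.mem_univ s')
    linarith [hT1 b]
  -- entropies are nonnegative
  have hHb0 : ∀ b : A, 0 ≤ -∑ s' : S, pT b s' * Real.log (pT b s') := fun b => by
    rw [← Finset.sum_neg_distrib]
    exact Finset.sum_nonneg fun s' _ => aux_neg_mul_log_nonneg (hT0 b s') (hT1' b s')
  have hH0 : 0 ≤ H := by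
    rw [hH, ← Finset.sum_neg_distrib]
    exact Finset.sum_nonneg fun s' _ => aux_neg_mul_log_nonneg (hm0 s') (hm1 s')
  -- Gibbs inequality: cross entropy ≥ entropy
  have gibbs : ∀ b : A, ∑ s' : S, pT b s' * Real.log (m s')
      ≤ ∑ s' : S, pT b s' * Real.log (pT b s') := by
    intro b
    have key : ∀ s' : S,
        pT b s' * Real.log (m s') - pT b s' * Real.log (pT b s') ≤ m s' - pT b s' := by
      intro s'
      rcases eq_or_lt_of_le (hT0 b s') with h0 | hpos
      · simp [← h0, hm0 s']
      · have hmpos : 0 < m s' := by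
          have : π b * pT b s' ≤ m s' := by
            rw [hm]
            exact Finset.single_le_sum
              (f := fun c => π c * pT c s')
              (fun c _ => mul_nonneg (hπpos c).le (hT0 c s')) (Finset.mem_univ b)
          nlinarith [hπpos b]
        have hlog : Real.log (m s' / pT b s') ≤ m s' / pT b s' - 1 :=
          Real.log_le_sub_one_of_pos (div_pos hmpos hpos)
        rw [Real.log_div hmpos.ne' hpos.ne'] at hlog
        have := mul_le_mul_of_nonneg_left hlog hpos.le
        have hcancel : pT b s' * (m s' / pT b s') = m s' := by
          field_simp
        nlinarith
    calc ∑ s' : S, pT b s' * Real.log (m s')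
        = ∑ s' : S, (pT b s' * Real.log (m s') - pT b s' * Real.log (pT b s'))
            + ∑ s' : S, pT b s' * Real.log (pT b s') := by
          rw [← Finset.sum_add_distrib]; apply Finset.sum_congr rfl; intros; ring
      _ ≤ ∑ s' : S, (m s' - pT b s') + ∑ s' : S, pT b s' * Real.log (pT b s') := by
          exact add_le_add_left (Finset.sum_le_sum fun s' _ => key s') _
      _ = ∑ s' : S, pT b s' * Real.log (pT b s') := by
          rw [Finset.sum_sub_distrib, hmsum, hT1 b]; ring
  -- decompose H
  have hHdecomp : H = ∑ b : A, π b * (-∑ s' : S, pT b s' * Real.log (m s')) := by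
    rw [hH]
    have : ∑ s' : S, m s' * Real.log (m s')
        = ∑ b : A, π b * ∑ s' : S, pT b s' * Real.log (m s') := by
      simp_rw [Finset.mul_sum]
      rw [Finset.sum_comm]
      apply Finset.sum_congr rfl
      intro s' _
      rw [hm, Finset.sum_mul]
      apply Finset.sum_congr rfl
      intros; ring
    rw [this, ← Finset.sum_neg_distrib]
    apply Finset.sum_congr rfl
    intros; ring
  -- H ≥ π a * H_a
  have hmain : π a * (-∑ s' : S, pT a s' * Real.log (pT a s')) ≤ H := by
    rw [hHdecomp]
    have step : ∀ b : A, π b * (-∑ s' : S, pT b s' * Real.log (pT b s'))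
        ≤ π b * (-∑ s' : S, pT b s' * Real.log (m s')) := fun b => by
      have := gibbs b
      nlinarith [hπpos b]
    calc π a * (-∑ s' : S, pT a s' * Real.log (pT a s'))
        ≤ ∑ b : A, π b * (-∑ s' : S, pT b s' * Real.log (pT b s')) :=
          Finset.single_le_sum
            (f := fun b => π b * (-∑ s' : S, pT b s' * Real.log (pT b s')))
            (fun b _ => mul_nonneg (hπpos b).le (hHb0 b)) (Finset.mem_univ a)
      _ ≤ ∑ b : A, π b * (-∑ s' : S, pT b s' * Real.log (m s')) :=
          Finset.sum_le_sum fun b _ => step b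
  -- conclude
  set c := Finset.univ.inf' Finset.univ_nonempty (fun a' : A => 1 - 1 / π a') with hc
  have hca : c ≤ 1 - 1 / π a := Finset.inf'_le _ (Finset.mem_univ a)
  set Ha := -∑ s' : S, pT a s' * Real.log (pT a s') with hHa
  have hπa := hπpos a
  have h2 : Ha ≤ H / π a := (le_div_iff₀ hπa).mpr (by nlinarith)
  have h3 : c * H ≤ (1 - 1 / π a) * H := mul_le_mul_of_nonneg_right hca hH0
  have h4 : (1 - 1 / π a) * H = H - H / π a := by
    field_simp
  linarith
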